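/- Let A ⊆ ℤⁿ be generic and let B ⊆ A be strongly neighborly in A. Then every nonempty subset of B is strongly neighborly in A (i.e., the collection N(A) of strongly neighborly subsets of A forms a simplicial complex). -/

import Mathlib

/-- `Dom α β` means `α ≪ β`: componentwise strict domination. -/
def Dom {n : ℕ} (α β : Fin n → ℤ) : Prop := ∀ i, α i < β i

/-- `vee B` is the componentwise maximum `∨B` of a finite set `B ⊆ ℤⁿ`
(junk value `0` in a component if `B` is empty). -/
def vee {n : ℕ} (B : Finset (Fin n → ℤ)) : Fin n → ℤ :=
  fun i => ((B.image fun α => α i).max).unbotD 0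

/-- `B` is neighborly in `A`: `B` is a nonempty finite subset of `A` and
no `α ∈ A` satisfies `α ≪ ∨B`. -/
def Neighborly {n : ℕ} (A : Set (Fin n → ℤ)) (B : Finset (Fin n → ℤ)) : Prop :=
  B.Nonempty ∧ ↑B ⊆ A ∧ ∀ α ∈ A, ¬ Dom α (vee B)


/-- `B` is strongly neighborly in `A`: `B` is a nonempty finite subset of `A` and
every nonempty finite `B' ⊆ A` with `∨B' = ∨B` equals `B`. -/
def StronglyNeighborly {n : ℕ} (A : Set (Fin n → ℤ)) (B : Finset (Fin n → ℤ)) : Prop :=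
  B.Nonempty ∧ ↑B ⊆ A ∧
    ∀ B' : Finset (Fin n → ℤ), B'.Nonempty → ↑B' ⊆ A → vee B' = vee B → B' = B


/-- `A ⊆ ℤⁿ` is generic: for every `η ∈ ℤⁿ` such that no `α ∈ A` satisfies `α ≪ η`,
and every coordinate `i`, at most one `α ∈ A` has `α ≤ η` and `α i = η i`. -/
def Generic {n : ℕ} (A : Set (Fin n → ℤ)) : Prop :=
  ∀ η : Fin n → ℤ, (∀ α ∈ A, ¬ Dom α η) →
    ∀ i : Fin n, ∀ α ∈ A, ∀ β ∈ A,
      α ≤ η → α i = η i → β ≤ η → β i = η i → α = β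

lemma vee_eq_max' {n : ℕ} {B : Finset (Fin n → ℤ)} {i : Fin n}
    (h : (B.image fun α => α i).Nonempty) :
    vee B i = (B.image fun α => α i).max' h := by
  show ((B.image fun α => α i).max).unbotD 0 = _
  rw [← Finset.coe_max' h]
  rfl

lemma le_vee {n : ℕ} {B : Finset (Fin n → ℤ)} {β : Fin n → ℤ} (hβ : β ∈ B) (i : Fin n) :
    β i ≤ vee B i := by
  rw [vee_eq_max' ⟨β i, Finset.mem_image_of_mem _ hβ⟩]
  exact Finset.le_max' (B.image fun α => α i) (β i) (Finset.mem_image_of_mem _ hβ)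

lemma exists_eq_vee {n : ℕ} {B : Finset (Fin n → ℤ)} (hB : B.Nonempty) (i : Fin n) :
    ∃ β ∈ B, β i = vee B i := by
  have h : (B.image fun α => α i).Nonempty := hB.image _
  obtain ⟨β, hβ, hβi⟩ := Finset.mem_image.mp (Finset.max'_mem _ h)
  refine ⟨β, hβ, ?_⟩
  rw [vee_eq_max' h]
  exact hβi

lemma vee_eq_of {n : ℕ} {B C : Finset (Fin n → ℤ)} (hB : B.Nonempty) (hC : C.Nonempty)
    (h1 : ∀ β ∈ B, ∀ i, β i ≤ vee C i) (h2 : ∀ γ ∈ C, ∀ i, γ i ≤ vee B i) :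
    vee B = vee C := by
  funext i
  apply le_antisymm
  · obtain ⟨β, hβ, hβi⟩ := exists_eq_vee hB i
    rw [← hβi]; exact h1 β hβ i
  · obtain ⟨γ, hγ, hγi⟩ := exists_eq_vee hC i
    rw [← hγi]; exact h2 γ hγ i

lemma vee_le_vee {n : ℕ} {B C : Finset (Fin n → ℤ)} (hB : B.Nonempty) (hBC : B ⊆ C)
    (i : Fin n) : vee B i ≤ vee C i := by
  obtain ⟨β, hβ, hβi⟩ := exists_eq_vee hB i
  rw [← hβi]; exact le_vee (hBC hβ) i

/-- In a strongly neighborly set, no element is strictly below `∨B` in all coordinates. -/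
lemma not_all_lt {n : ℕ} (hn : 0 < n) {A : Set (Fin n → ℤ)} {B : Finset (Fin n → ℤ)}
    (hB : StronglyNeighborly A B) {β : Fin n → ℤ} (hβ : β ∈ B)
    (hlt : ∀ i, β i < vee B i) : False := by
  obtain ⟨γ, hγ, hγ0⟩ := exists_eq_vee hB.1 ⟨0, hn⟩
  have hne : γ ≠ β := fun h => absurd hγ0 (by rw [h]; exact (hlt _).ne)
  have hBne : (B.erase β).Nonempty := ⟨γ, Finset.mem_erase.mpr ⟨hne, hγ⟩⟩
  have hveq : vee (B.erase β) = vee B := by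
    apply vee_eq_of hBne hB.1
    · intro b hb i; exact le_vee (Finset.mem_of_mem_erase hb) i
    · intro c hc i
      by_cases hcb : c = β
      · subst hcb
        obtain ⟨d, hd, hdi⟩ := exists_eq_vee hB.1 i
        have hdc : d ≠ c := fun h => absurd hdi (by rw [h]; exact (hlt i).ne)
        calc c i ≤ vee B i := (hlt i).le
          _ = d i := hdi.symm
          _ ≤ vee (B.erase c) i := le_vee (Finset.mem_erase.mpr ⟨hdc, hd⟩) i
      · exact le_vee (Finset.mem_erase.mpr ⟨hcb, hc⟩) i
  have hsubA : ↑(B.erase β) ⊆ A := fun x hx => hB.2.1 (Finset.mem_of_mem_erase hx)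
  have := hB.2.2 (B.erase β) hBne hsubA hveq
  exact absurd (this ▸ Finset.notMem_erase β B) (by simp [hβ])

/-- A strongly neighborly set is neighborly (for `n > 0`). -/
lemma not_dom {n : ℕ} (hn : 0 < n) {A : Set (Fin n → ℤ)} {B : Finset (Fin n → ℤ)}
    (hB : StronglyNeighborly A B) : ∀ α ∈ A, ¬ Dom α (vee B) := by
  intro α hα hdom
  have hveq : vee (insert α B) = vee B := by
    apply vee_eq_of ⟨α, Finset.mem_insert_self α B⟩ hB.1
    · intro b hb i
      rcases Finset.mem_insert.mp hb with rfl | hb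
      · exact (hdom i).le
      · exact le_vee hb i
    · intro c hc i; exact le_vee (Finset.mem_insert_of_mem hc) i
  have hsubA : ↑(insert α B) ⊆ A := by
    intro x hx
    rcases Finset.mem_insert.mp (by exact_mod_cast hx) with rfl | hx
    · exact hα
    · exact hB.2.1 hx
  have heq := hB.2.2 (insert α B) ⟨α, Finset.mem_insert_self α B⟩ hsubA hveq
  have hαB : α ∈ B := heq ▸ Finset.mem_insert_self α B
  exact not_all_lt hn hB hαB hdom

theorem stmt3 {n : ℕ} (A : Set (Fin n → ℤ)) (hA : Generic A)
    (B : Finset (Fin n → ℤ)) (hB : StronglyNeighborly A B)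
    (B' : Finset (Fin n → ℤ)) (hB'ne : B'.Nonempty) (hsub : B' ⊆ B) :
    StronglyNeighborly A B' := by
  rcases Nat.eq_zero_or_pos n with hn | hn
  · subst hn
    obtain ⟨b, hb⟩ := hB'ne
    have hBB' : B = B' := by
      apply Finset.Subset.antisymm _ hsub
      intro x hx
      have : x = b := funext fun i => i.elim0
      rwa [this]
    rw [← hBB']
    exact hB
  · refine ⟨hB'ne, fun x hx => hB.2.1 (hsub hx), ?_⟩
    intro C hCne hCA hveq
    have hη := not_dom hn hB
    have hgen := hA (vee B) hη
    set D := C ∪ (B \ B') with hD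
    have hDne : D.Nonempty := hCne.mono Finset.subset_union_left
    have hDA : ↑D ⊆ A := by
      intro x hx
      rcases Finset.mem_union.mp (by exact_mod_cast hx) with hx | hx
      · exact hCA hx
      · exact hB.2.1 (Finset.mem_sdiff.mp hx).1
    have hveeD : vee D = vee B := by
      apply vee_eq_of hDne hB.1
      · intro d hd i
        rcases Finset.mem_union.mp hd with hd | hd
        · calc d i ≤ vee C i := le_vee hd i
            _ = vee B' i := by rw [hveq]
            _ ≤ vee B i := vee_le_vee hB'ne hsub i
        · exact le_vee (Finset.mem_sdiff.mp hd).1 i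
      · intro b hb i
        by_cases hb' : b ∈ B'
        · calc b i ≤ vee B' i := le_vee hb' i
            _ = vee C i := by rw [hveq]
            _ ≤ vee D i := vee_le_vee hCne Finset.subset_union_left i
        · exact le_vee (Finset.mem_union_right _ (Finset.mem_sdiff.mpr ⟨hb, hb'⟩)) i
    have hDB : D = B := hB.2.2 D hDne hDA hveeD
    have hCB : C ⊆ B := by
      intro x hx; rw [← hDB]; exact Finset.mem_union_left _ hx
    have hB'C : B' ⊆ C := by
      intro x hx
      have hxB : x ∈ B := hsub hx
      rw [← hDB] at hxB
      rcases Finset.mem_union.mp hxB with h | h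
      · exact h
      · exact absurd hx (Finset.mem_sdiff.mp h).2
    apply Finset.Subset.antisymm _ hB'C
    intro β hβC
    by_contra hβB'
    have hβB : β ∈ B := hCB hβC
    have hach : ∃ i, β i = vee B i := by
      by_contra h
      push_neg at h
      exact not_all_lt hn hB hβB fun i => lt_of_le_of_ne (le_vee hβB i) (h i)
    obtain ⟨i, hi⟩ := hach
    have h1 : β i ≤ vee B' i := by rw [← hveq]; exact le_vee hβC i
    have h2 : vee B' i ≤ vee B i := vee_le_vee hB'ne hsub i
    obtain ⟨γ, hγB', hγi⟩ := exists_eq_vee hB'ne i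
    have hγA : γ ∈ A := hB.2.1 (hsub hγB')
    have hγle : γ ≤ vee B := fun j => le_vee (hsub hγB') j
    have hγieq : γ i = vee B i := by
      have hv : vee B' i = vee B i := le_antisymm h2 (hi ▸ h1)
      rw [hγi, hv]
    have hβle : β ≤ vee B := fun j => le_vee hβB j
    have hβγ : β = γ := hgen i β (hCA hβC) γ hγA hβle hi hγle hγieq
    exact hβB' (hβγ ▸ hγB')
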